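/- Let p>1, q∈ℝ, and let F∈C²([0,T)) be positive and satisfy F''(t) ≥ K₁(t+R)^{-q} F(t)^p for all t∈[T₁,T), for some K₁,R>0 and T₁∈[0,T). If additionally F(t) ≥ K₀(t+R)^a for all t∈[T₀,T) for some a≥1 with a > (q-2)/(p-1) and some K₀>0, T₀∈[0,T), then T < ∞. -/

import Mathlib

open Set

private lemma key_mono {h h' : ℝ → ℝ} {A : ℝ}
    (hd : ∀ t ∈ Set.Ici A, HasDerivAt h (h' t) t)
    (hnn : ∀ t ∈ Set.Ioi A, 0 ≤ h' t) :
    ∀ t, A ≤ t → h A ≤ h t := by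
  have hmono : MonotoneOn h (Set.Ici A) := by
    apply monotoneOn_of_deriv_nonneg (convex_Ici A)
    · exact fun t ht => (hd t ht).continuousAt.continuousWithinAt
    · intro t ht
      rw [interior_Ici] at ht
      exact ((hd t (Set.Ioi_subset_Ici_self ht)).differentiableAt).differentiableWithinAt
    · intro t ht
      rw [interior_Ici] at ht
      rw [(hd t (Set.Ioi_subset_Ici_self ht)).deriv]
      exact hnn t ht
  exact fun t htt => hmono self_mem_Ici htt htt

private lemma hasDerivAt_shift_rpow (R e t : ℝ) (ht : 0 < t + R) :
    HasDerivAt (fun x => (x + R) ^ e) (e * (t + R) ^ (e - 1)) t := by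
  have h1 : HasDerivAt (fun x : ℝ => x + R) 1 t := (hasDerivAt_id t).add_const R
  have h2 := h1.rpow_const (p := e) (Or.inl (ne_of_gt ht))
  convert h2 using 1
  ring

private lemma eventually_rpow_ge {R c e : ℝ} (hc : 0 < c) (he : 0 < e)
    (M A : ℝ) : ∃ S, A ≤ S ∧ 0 ≤ S ∧ ∀ t, S ≤ t → M ≤ c * (t + R) ^ e := by
  set N := max (M / c) 1 with hN
  have hN1 : (1:ℝ) ≤ N := le_max_right _ _
  have hN0 : (0:ℝ) < N := lt_of_lt_of_le one_pos hN1
  refine ⟨max A (max 0 (N ^ (1/e) - R)), le_max_left _ _,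
    le_trans (le_max_left 0 _) (le_max_right _ _), ?_⟩
  intro t ht
  have hB : N ^ (1/e) - R ≤ t :=
    le_trans (le_max_right _ _) (le_trans (le_max_right _ _) ht)
  have htR : N ^ (1/e) ≤ t + R := by linarith
  have h2 : (N ^ (1/e)) ^ e ≤ (t + R) ^ e :=
    Real.rpow_le_rpow (Real.rpow_nonneg hN0.le _) htR he.le
  rw [← Real.rpow_mul hN0.le, one_div, inv_mul_cancel₀ (ne_of_gt he), Real.rpow_one] at h2
  have h3 : M / c ≤ (t + R) ^ e := le_trans (le_max_left _ _) h2
  calc M = c * (M / c) := by field_simp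
    _ ≤ c * (t + R) ^ e := mul_le_mul_of_nonneg_left h3 hc.le

set_option maxHeartbeats 2000000 in
/-- Blow-up lemma for ordinary differential inequalities (supercritical case):
no positive `C²` function on `[0,∞)` can satisfy `F'' ≥ K₁ (t+R)^{-q} F^p` on `[T₁,∞)`
together with the lower bound `F ≥ K₀ (t+R)^a` on `[T₀,∞)` with `a ≥ 1`,
`a > (q-2)/(p-1)`; hence the maximal existence time `T` is finite. -/
theorem stmt0 (p q K₁ R K₀ a T₀ T₁ : ℝ) (F : ℝ → ℝ)
    (hp : 1 < p) (hK₁ : 0 < K₁) (hR : 0 < R) (hK₀ : 0 < K₀)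
    (hT₁ : 0 ≤ T₁) (hT₀ : 0 ≤ T₀) (ha1 : 1 ≤ a) (ha2 : (q - 2) / (p - 1) < a)
    (hF : ContDiffOn ℝ 2 F (Set.Ici (0:ℝ)))
    (hpos : ∀ t ∈ Set.Ici (0:ℝ), 0 < F t)
    (hineq : ∀ t, T₁ ≤ t → K₁ * (t + R) ^ (-q) * F t ^ p ≤ deriv (deriv F) t)
    (hlow : ∀ t, T₀ ≤ t → K₀ * (t + R) ^ a ≤ F t) : False := by
  have hp1 : (0:ℝ) < p - 1 := by linarith
  have hq2 : q - 2 < a * (p - 1) := by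
    have := (div_lt_iff₀ hp1).1 ha2
    nlinarith
  set γ := a * (p - 1) - q + 2 with hγdef
  have hγ : 0 < γ := by simp only [hγdef]; linarith
  -- regularity
  have hC : ContDiffOn ℝ 2 F (Set.Ioi 0) := hF.mono Set.Ioi_subset_Ici_self
  have hd1 : DifferentiableOn ℝ F (Set.Ioi 0) := hC.differentiableOn (by norm_num)
  have hC' : ContDiffOn ℝ 1 (deriv F) (Set.Ioi 0) :=
    hC.deriv_of_isOpen isOpen_Ioi (by norm_num)
  have hd2 : DifferentiableOn ℝ (deriv F) (Set.Ioi 0) := hC'.differentiableOn (by norm_num)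
  have hdF : ∀ t : ℝ, 0 < t → HasDerivAt F (deriv F t) t := fun t ht =>
    (hd1.differentiableAt (isOpen_Ioi.mem_nhds ht)).hasDerivAt
  have hdF2 : ∀ t : ℝ, 0 < t → HasDerivAt (deriv F) (deriv (deriv F) t) t := fun t ht =>
    (hd2.differentiableAt (isOpen_Ioi.mem_nhds ht)).hasDerivAt
  have hFpos : ∀ t : ℝ, 0 ≤ t → 0 < F t := fun t ht => hpos t ht
  -- bootstrap step
  have hstep : ∀ b K S, a ≤ b → 0 < K → max 1 T₁ ≤ S →
      (∀ t, S ≤ t → K * (t + R) ^ b ≤ F t) →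
      ∃ K' S', 0 < K' ∧ S ≤ S' ∧ ∀ t, S' ≤ t → K' * (t + R) ^ (b + γ) ≤ F t := by
    intro b K S hab hK hS hlb
    have hb1 : (1:ℝ) ≤ b := le_trans ha1 hab
    have hS1 : (1:ℝ) ≤ S := le_trans (le_max_left _ _) hS
    have hST₁ : T₁ ≤ S := le_trans (le_max_right _ _) hS
    set e := p * b - q with hedef
    have hgain : b + γ ≤ e + 2 := by
      simp only [hedef, hγdef]; nlinarith
    have he1 : 0 < e + 1 := by simp only [hedef]; nlinarith
    have he2 : 0 < e + 2 := by linarith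
    have hposR : ∀ t : ℝ, S ≤ t → 0 < t + R := fun t ht => by linarith
    -- F'' lower bound as pure power
    have h1 : ∀ t, S ≤ t → K₁ * K ^ p * (t + R) ^ e ≤ deriv (deriv F) t := by
      intro t ht
      have htR : 0 < t + R := hposR t ht
      have hKz : 0 < K * (t + R) ^ b := mul_pos hK (Real.rpow_pos_of_pos htR b)
      have h2 : (K * (t + R) ^ b) ^ p ≤ F t ^ p :=
        Real.rpow_le_rpow hKz.le (hlb t ht) (by linarith)
      have h3 : (K * (t + R) ^ b) ^ p = K ^ p * (t + R) ^ (b * p) := by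
        rw [Real.mul_rpow hK.le (Real.rpow_pos_of_pos htR b).le, ← Real.rpow_mul htR.le]
      have h4 := hineq t (le_trans hST₁ ht)
      have h5 : K₁ * (t + R) ^ (-q) * (K ^ p * (t + R) ^ (b * p)) ≤
          K₁ * (t + R) ^ (-q) * F t ^ p := by
        apply mul_le_mul_of_nonneg_left (by rw [← h3]; exact h2)
        positivity
      have h6 : K₁ * (t + R) ^ (-q) * (K ^ p * (t + R) ^ (b * p)) =
          K₁ * K ^ p * (t + R) ^ e := by
        rw [show K₁ * (t + R) ^ (-q) * (K ^ p * (t + R) ^ (b * p)) =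
          K₁ * K ^ p * ((t + R) ^ (-q) * (t + R) ^ (b * p)) by ring,
          ← Real.rpow_add htR]
        rw [hedef]; ring_nf
      rw [h6] at h5
      linarith
    -- integrate once
    set c₁ := K₁ * K ^ p / (e + 1) with hc₁def
    have hc₁ : 0 < c₁ := by positivity
    have hint1 : ∀ t, S ≤ t →
        c₁ * (t + R) ^ (e + 1) - (c₁ * (S + R) ^ (e + 1) - deriv F S) ≤ deriv F t := by
      have hm := key_mono (h := fun t => deriv F t - c₁ * (t + R) ^ (e + 1))
        (h' := fun t => deriv (deriv F) t - c₁ * ((e + 1) * (t + R) ^ e)) (A := S)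
        (fun t ht => by
          have htpos : 0 < t := lt_of_lt_of_le one_pos (le_trans hS1 ht)
          have hψ := hasDerivAt_shift_rpow R (e + 1) t (hposR t ht)
          rw [show e + 1 - 1 = e by ring] at hψ
          exact (hdF2 t htpos).sub (hψ.const_mul c₁))
        (fun t ht => by
          have h1t := h1 t (le_of_lt ht)
          have : c₁ * ((e + 1) * (t + R) ^ e) = K₁ * K ^ p * (t + R) ^ e := by
            rw [hc₁def, ← mul_assoc, div_mul_cancel₀ _ he1.ne']
          simp only [this]
          simp only [sub_nonneg]
          linarith)
      intro t ht
      have := hm t ht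
      linarith
    -- dominate constant
    obtain ⟨S₁, hSS₁, hS₁0, hdom1⟩ := eventually_rpow_ge (R := R) (half_pos hc₁) he1
      (c₁ * (S + R) ^ (e + 1) - deriv F S) S
    have hint1' : ∀ t, S₁ ≤ t → c₁ / 2 * (t + R) ^ (e + 1) ≤ deriv F t := by
      intro t ht
      have ha' := hint1 t (le_trans hSS₁ ht)
      have hb' := hdom1 t ht
      linarith
    -- integrate twice
    set c₂ := c₁ / 2 / (e + 2) with hc₂def
    have hc₂ : 0 < c₂ := by positivity
    have hint2 : ∀ t, S₁ ≤ t →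
        c₂ * (t + R) ^ (e + 2) - (c₂ * (S₁ + R) ^ (e + 2) - F S₁) ≤ F t := by
      have hm := key_mono (h := fun t => F t - c₂ * (t + R) ^ (e + 2))
        (h' := fun t => deriv F t - c₂ * ((e + 2) * (t + R) ^ (e + 1))) (A := S₁)
        (fun t ht => by
          have htS : S ≤ t := le_trans hSS₁ ht
          have htpos : 0 < t := lt_of_lt_of_le one_pos (le_trans hS1 htS)
          have hψ := hasDerivAt_shift_rpow R (e + 2) t (hposR t htS)
          rw [show e + 2 - 1 = e + 1 by ring] at hψ
          exact (hdF t htpos).sub (hψ.const_mul c₂))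
        (fun t ht => by
          have h1t := hint1' t (le_of_lt ht)
          have : c₂ * ((e + 2) * (t + R) ^ (e + 1)) = c₁ / 2 * (t + R) ^ (e + 1) := by
            rw [hc₂def, ← mul_assoc, div_mul_cancel₀ _ he2.ne']
          simp only [this]
          simp only [sub_nonneg]
          linarith)
      intro t ht
      have := hm t ht
      linarith
    obtain ⟨S₂, hS₁S₂, hS₂0, hdom2⟩ := eventually_rpow_ge (R := R) (half_pos hc₂) he2
      (c₂ * (S₁ + R) ^ (e + 2) - F S₁) S₁
    refine ⟨c₂ / 2, S₂, half_pos hc₂, le_trans hSS₁ hS₁S₂, ?_⟩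
    intro t ht
    have htS : S ≤ t := le_trans hSS₁ (le_trans hS₁S₂ ht)
    have h1R : (1:ℝ) ≤ t + R := by
      have : (1:ℝ) ≤ t := le_trans hS1 htS
      linarith
    have hexp : (t + R) ^ (b + γ) ≤ (t + R) ^ (e + 2) :=
      Real.rpow_le_rpow_of_exponent_le h1R hgain
    have ha' := hint2 t (le_trans hS₁S₂ ht)
    have hb' := hdom2 t ht
    calc c₂ / 2 * (t + R) ^ (b + γ) ≤ c₂ / 2 * (t + R) ^ (e + 2) :=
          mul_le_mul_of_nonneg_left hexp (half_pos hc₂).le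
      _ ≤ F t := by linarith
  -- iterate the bootstrap
  have hiter : ∀ n : ℕ, ∃ K S, 0 < K ∧ max 1 T₁ ≤ S ∧
      ∀ t, S ≤ t → K * (t + R) ^ (a + n * γ) ≤ F t := by
    intro n
    induction n with
    | zero =>
      refine ⟨K₀, max 1 (max T₀ T₁), hK₀,
        max_le (le_max_left _ _) (le_trans (le_max_right T₀ T₁) (le_max_right _ _)), ?_⟩
      · intro t ht
        have hT₀t : T₀ ≤ t := le_trans (le_trans (le_max_left _ _) (le_max_right _ _)) ht
        have := hlow t hT₀t
        simpa using this
    | succ n ih =>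
      obtain ⟨K, S, hK, hS, hlb⟩ := ih
      have hab : a ≤ a + n * γ := by
        have : (0:ℝ) ≤ n * γ := mul_nonneg (Nat.cast_nonneg n) hγ.le
        linarith
      obtain ⟨K', S', hK', hSS', hlb'⟩ := hstep (a + n * γ) K S hab hK hS hlb
      refine ⟨K', S', hK', le_trans hS hSS', ?_⟩
      intro t ht
      have := hlb' t ht
      have hexp : a + (n + 1 : ℕ) * γ = a + n * γ + γ := by push_cast; ring
      rw [hexp]
      exact this
  -- choose a power with b (p-1) > q
  obtain ⟨n, hn⟩ := exists_nat_gt ((q / (p - 1) - a) / γ)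
  obtain ⟨K, S, hK, hS, hlb⟩ := hiter n
  set b := a + n * γ with hbdef
  have hab : a ≤ b := by
    have : (0:ℝ) ≤ n * γ := mul_nonneg (Nat.cast_nonneg n) hγ.le
    simp only [hbdef]; linarith
  have hb1 : (1:ℝ) ≤ b := le_trans ha1 hab
  have hb0 : (0:ℝ) < b := lt_of_lt_of_le one_pos hb1
  have hbq : q < b * (p - 1) := by
    have h1 : q / (p - 1) - a < n * γ := (div_lt_iff₀ hγ).1 hn
    have h2 : q / (p - 1) < b := by simp only [hbdef]; linarith
    have := (div_lt_iff₀ hp1).1 h2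
    linarith
  have hS1 : (1:ℝ) ≤ S := le_trans (le_max_left _ _) hS
  have hST₁ : T₁ ≤ S := le_trans (le_max_right _ _) hS
  clear hiter hstep hlow hq2 ha2 hn
  -- pure power inequality F'' ≥ c F^m
  set δ := max q 0 / b with hδdef
  have hδ0 : 0 ≤ δ := div_nonneg (le_max_right _ _) hb0.le
  have hbδ : b * δ = max q 0 := by rw [hδdef, mul_div_cancel₀ _ hb0.ne']
  have hδq : q ≤ b * δ := by rw [hbδ]; exact le_max_left _ _
  have hδlt : δ < p - 1 := by
    rw [hδdef, div_lt_iff₀ hb0]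
    rcases le_or_gt q 0 with h | h
    · rw [max_eq_right h]; positivity
    · rw [max_eq_left h.le]; linarith [hbq]
  set m := p - δ with hmdef
  have hm1 : 1 < m := by simp only [hmdef]; linarith
  set c := K₁ * K ^ δ with hcdef
  have hc : 0 < c := by positivity
  have hkey : ∀ t, S ≤ t → c * F t ^ m ≤ deriv (deriv F) t := by
    intro t ht
    have htR : 0 < t + R := by linarith
    have h1R : (1:ℝ) ≤ t + R := by
      have : (1:ℝ) ≤ t := le_trans hS1 ht
      linarith
    have hFt : 0 < F t := hFpos t (by linarith)
    have hsplit : F t ^ p = F t ^ δ * F t ^ m := by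
      rw [← Real.rpow_add hFt]
      congr 1
      simp only [hmdef]; ring
    have hδlb : K ^ δ * (t + R) ^ (b * δ) ≤ F t ^ δ := by
      have h2 : (K * (t + R) ^ b) ^ δ ≤ F t ^ δ :=
        Real.rpow_le_rpow (by positivity) (hlb t ht) hδ0
      rwa [Real.mul_rpow hK.le (Real.rpow_pos_of_pos htR b).le,
        ← Real.rpow_mul htR.le] at h2
    have hsc : c ≤ K₁ * (t + R) ^ (-q) * F t ^ δ := by
      have h3 : K₁ * (t + R) ^ (-q) * (K ^ δ * (t + R) ^ (b * δ)) ≤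
          K₁ * (t + R) ^ (-q) * F t ^ δ := by
        apply mul_le_mul_of_nonneg_left hδlb
        positivity
      have h4 : K₁ * (t + R) ^ (-q) * (K ^ δ * (t + R) ^ (b * δ)) =
          c * (t + R) ^ (b * δ - q) := by
        rw [show K₁ * (t + R) ^ (-q) * (K ^ δ * (t + R) ^ (b * δ)) =
          K₁ * K ^ δ * ((t + R) ^ (-q) * (t + R) ^ (b * δ)) by ring,
          ← Real.rpow_add htR, hcdef]
        ring_nf
      have h5 : (1:ℝ) ≤ (t + R) ^ (b * δ - q) := by
        have := Real.rpow_le_rpow_of_exponent_le h1R (by linarith : (0:ℝ) ≤ b * δ - q)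
        rwa [Real.rpow_zero] at this
      nlinarith [Real.rpow_pos_of_pos htR (b * δ - q)]
    have h6 := hineq t (le_trans hST₁ ht)
    have h7 : c * F t ^ m ≤ K₁ * (t + R) ^ (-q) * F t ^ δ * F t ^ m :=
      mul_le_mul_of_nonneg_right hsc (Real.rpow_nonneg hFt.le m)
    calc c * F t ^ m ≤ K₁ * (t + R) ^ (-q) * F t ^ δ * F t ^ m := h7
      _ = K₁ * (t + R) ^ (-q) * F t ^ p := by rw [hsplit]; ring
      _ ≤ deriv (deriv F) t := h6
  -- find a point where F' > 0
  obtain ⟨T₃, hT₃S, hF'T₃⟩ : ∃ T₃, S ≤ T₃ ∧ 0 < deriv F T₃ := by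
    by_contra hcon
    push_neg at hcon
    have hmono := key_mono (h := fun t => -F t) (h' := fun t => -deriv F t) (A := S)
      (fun t ht => by
        have : 0 < t := lt_of_lt_of_le one_pos (le_trans hS1 ht)
        exact (hdF t this).neg)
      (fun t ht => by
        simp only [neg_nonneg]
        exact hcon t (le_of_lt ht))
    obtain ⟨S', hS'S, _, hbig⟩ := eventually_rpow_ge (R := R) hK hb0 (F S + 1) S
    have h1 := hmono S' hS'S
    have h2 := le_trans (hbig S' le_rfl) (hlb S' hS'S)
    linarith
  have hT₃pos : 0 < T₃ := lt_of_lt_of_le one_pos (le_trans hS1 hT₃S)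
  have hF'pos : ∀ t, T₃ ≤ t → 0 < deriv F t := by
    have hmono := key_mono (h := deriv F) (h' := deriv (deriv F)) (A := T₃)
      (fun t ht => hdF2 t (lt_of_lt_of_le hT₃pos ht))
      (fun t ht => by
        have hSt : S ≤ t := le_trans hT₃S (le_of_lt ht)
        have hFt : 0 < F t := hFpos t (by linarith [le_trans hS1 hSt])
        have := hkey t hSt
        nlinarith [Real.rpow_pos_of_pos hFt m])
    intro t ht
    exact lt_of_lt_of_le hF'T₃ (hmono t ht)
  -- energy argument
  set E := fun t => (deriv F t) ^ (2:ℕ) - 2 * c / (m + 1) * F t ^ (m + 1) with hEdef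
  have hm10 : (0:ℝ) < m + 1 := by linarith
  have hEmono : ∀ t, T₃ ≤ t → E T₃ ≤ E t := by
    apply key_mono (h' := fun t =>
      2 * deriv F t * deriv (deriv F) t -
        2 * c / (m + 1) * (deriv F t * (m + 1) * F t ^ m))
    · intro t ht
      have htpos : 0 < t := lt_of_lt_of_le hT₃pos ht
      have hFt : 0 < F t := hFpos t htpos.le
      have hd2t := hdF2 t htpos
      have hdsq : HasDerivAt (fun x => (deriv F x) ^ (2:ℕ))
          (2 * deriv F t * deriv (deriv F) t) t := by
        have : HasDerivAt (fun x => deriv F x ^ (2:ℕ)) _ t := hd2t.pow 2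
        convert this using 1
        push_cast
        ring
      have hdFp : HasDerivAt (fun x => F x ^ (m + 1))
          (deriv F t * (m + 1) * F t ^ m) t := by
        have := (hdF t htpos).rpow_const (p := m + 1) (Or.inl (ne_of_gt hFt))
        rwa [show m + 1 - 1 = m by ring] at this
      exact hdsq.sub (hdFp.const_mul (2 * c / (m + 1)))
    · intro t ht
      have hSt : S ≤ t := le_trans hT₃S (le_of_lt ht)
      have h1 := hkey t hSt
      have h2 : 0 < deriv F t := hF'pos t (le_of_lt ht)
      have heq : 2 * deriv F t * deriv (deriv F) t -
          2 * c / (m + 1) * (deriv F t * (m + 1) * F t ^ m) =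
          2 * deriv F t * (deriv (deriv F) t - c * F t ^ m) := by
        field_simp
      rw [heq]
      have := sub_nonneg.2 h1
      positivity
  -- eventual positivity of the main energy term
  obtain ⟨T₄, hT₄T₃, hT₄0, hdom⟩ := eventually_rpow_ge (R := R)
    (c := K ^ (m + 1)) (e := b * (m + 1)) (by positivity) (by positivity)
    ((-(E T₃)) * (m + 1) / c) T₃
  have hFm1 : ∀ t, T₄ ≤ t → (-(E T₃)) * (m + 1) / c ≤ F t ^ (m + 1) := by
    intro t ht
    have hSt : S ≤ t := le_trans hT₃S (le_trans hT₄T₃ ht)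
    have htR : 0 < t + R := by linarith [le_trans hS1 hSt]
    have h1 : (K * (t + R) ^ b) ^ (m + 1) ≤ F t ^ (m + 1) :=
      Real.rpow_le_rpow (by positivity) (hlb t hSt) hm10.le
    rw [Real.mul_rpow hK.le (Real.rpow_pos_of_pos htR b).le,
      ← Real.rpow_mul htR.le] at h1
    exact le_trans (hdom t ht) h1
  set κ := Real.sqrt (c / (m + 1)) with hκdef
  have hκ : 0 < κ := Real.sqrt_pos.2 (by positivity)
  set s := (m + 1) / 2 with hsdef
  have hs1 : 1 < s := by simp only [hsdef]; linarith
  have hF'ge : ∀ t, T₄ ≤ t → κ * F t ^ s ≤ deriv F t := by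
    intro t ht
    have hT₃t : T₃ ≤ t := le_trans hT₄T₃ ht
    have hFt : 0 < F t := hFpos t (by linarith [le_trans hS1 (le_trans hT₃S hT₃t)])
    have hE := hEmono t hT₃t
    have hM := hFm1 t ht
    have hF' : 0 < deriv F t := hF'pos t hT₃t
    have hsq : (κ * F t ^ s) ^ (2:ℕ) ≤ (deriv F t) ^ (2:ℕ) := by
      have hks : (F t ^ s) * (F t ^ s) = F t ^ (m + 1) := by
        rw [← Real.rpow_add hFt]
        congr 1
        rw [hsdef]; ring
      have hkk : κ * κ = c / (m + 1) := Real.mul_self_sqrt (by positivity)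
      have h1 : (κ * F t ^ s) ^ (2:ℕ) = c / (m + 1) * F t ^ (m + 1) := by
        calc (κ * F t ^ s) ^ (2:ℕ) = (κ * κ) * ((F t ^ s) * (F t ^ s)) := by ring
          _ = c / (m + 1) * F t ^ (m + 1) := by rw [hks, hkk]
      rw [h1]
      have h2 : -(E T₃) ≤ c / (m + 1) * F t ^ (m + 1) := by
        have hmul := mul_le_mul_of_nonneg_left hM
          (le_of_lt (by positivity : (0:ℝ) < c / (m + 1)))
        have heq : c / (m + 1) * (-(E T₃) * (m + 1) / c) = -(E T₃) := by
          field_simp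
        linarith
      have h3 : E T₃ ≤ (deriv F t) ^ (2:ℕ) - 2 * c / (m + 1) * F t ^ (m + 1) := hE
      have h5 : 2 * c / (m + 1) * F t ^ (m + 1) = 2 * (c / (m + 1) * F t ^ (m + 1)) := by
        ring
      linarith
    have h4 : κ * F t ^ s = Real.sqrt ((κ * F t ^ s) ^ (2:ℕ)) := by
      rw [Real.sqrt_sq (by positivity)]
    rw [h4]
    calc Real.sqrt ((κ * F t ^ s) ^ (2:ℕ)) ≤ Real.sqrt ((deriv F t) ^ (2:ℕ)) :=
          Real.sqrt_le_sqrt hsq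
      _ = deriv F t := Real.sqrt_sq hF'.le
  -- final blow-up argument via H = F^(1-s)
  have hT₄S : S ≤ T₄ := le_trans hT₃S hT₄T₃
  have hHmono := key_mono (h := fun t => -(F t ^ (1 - s)) - κ * (s - 1) * t)
    (h' := fun t => -(deriv F t * (1 - s) * F t ^ (-s)) - κ * (s - 1)) (A := T₄)
    (fun t ht => by
      have htpos : 0 < t := lt_of_lt_of_le (lt_of_lt_of_le one_pos (le_trans hS1 hT₄S)) ht
      have hFt : 0 < F t := hFpos t htpos.le
      have hH : HasDerivAt (fun x => F x ^ (1 - s))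
          (deriv F t * (1 - s) * F t ^ (-s)) t := by
        have := (hdF t htpos).rpow_const (p := 1 - s) (Or.inl (ne_of_gt hFt))
        rwa [show 1 - s - 1 = -s by ring] at this
      exact (hH.neg).sub
        (((hasDerivAt_id t).const_mul (κ * (s - 1))).congr_deriv (by ring)))
    (fun t ht => by
      have htT₄ : T₄ ≤ t := le_of_lt ht
      have htpos : 0 < t := lt_of_lt_of_le (lt_of_lt_of_le one_pos (le_trans hS1 hT₄S)) htT₄
      have hFt : 0 < F t := hFpos t htpos.le
      have hge := hF'ge t htT₄
      have hFs : 0 < F t ^ (-s) := Real.rpow_pos_of_pos hFt (-s)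
      have hprod : F t ^ (-s) * F t ^ s = 1 := by
        rw [← Real.rpow_add hFt]
        norm_num
      have h1 : κ * (s - 1) ≤ (s - 1) * (deriv F t * F t ^ (-s)) := by
        have hmul := mul_le_mul_of_nonneg_left hge
          (mul_nonneg (sub_nonneg.2 hs1.le) hFs.le)
        calc κ * (s - 1) = (s - 1) * F t ^ (-s) * (κ * F t ^ s) := by
              rw [show (s - 1) * F t ^ (-s) * (κ * F t ^ s) =
                κ * (s - 1) * (F t ^ (-s) * F t ^ s) by ring, hprod]
              ring
          _ ≤ (s - 1) * F t ^ (-s) * deriv F t := hmul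
          _ = (s - 1) * (deriv F t * F t ^ (-s)) := by ring
      nlinarith [h1])
  set H := F T₄ ^ (1 - s) with hHdef
  have hHpos : 0 < H := Real.rpow_pos_of_pos (hFpos T₄ (by linarith [le_trans hS1 hT₄S])) _
  set t₅ := T₄ + H / (κ * (s - 1)) + 1 with ht₅def
  have hκs : 0 < κ * (s - 1) := by nlinarith
  have ht₅ : T₄ ≤ t₅ := by
    have : 0 < H / (κ * (s - 1)) := by positivity
    simp only [ht₅def]; linarith
  have hfin := hHmono t₅ ht₅
  have hkey5 : κ * (s - 1) * (t₅ - T₄) = H + κ * (s - 1) := by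
    rw [ht₅def]
    rw [show T₄ + H / (κ * (s - 1)) + 1 - T₄ = H / (κ * (s - 1)) + 1 by ring,
      mul_add, mul_div_cancel₀ _ hκs.ne', mul_one]
  have hFt₅ : 0 < F t₅ ^ (1 - s) :=
    Real.rpow_pos_of_pos (hFpos t₅ (by linarith [le_trans hS1 hT₄S])) _
  nlinarith [hfin, hkey5, hFt₅]
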